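/- arXiv:2302.09905 — 2 statements merged into one kernel-verified Lean document; each statement's English description precedes it below -/
import Mathlib

section
/- For a qubit state ρ with smaller eigenvalue λ_− ∈ [0, 1/2] and Hamiltonian H = E|1⟩⟨1|, E > 0, and any p ≥ 2, the capacity and Tsallis entropy T_p(ρ) = (1 − λ_−^p − (1−λ_−)^p)/(p−1) satisfy C(ρ; H)/E + T_p(ρ) ≤ 1. -/
/-- for a qubit with smaller eigenvalue λ₋ ∈ [0,1/2], H = E|1⟩⟨1| with E > 0,
and any p ≥ 2, the capacity C = E(1 − 2λ₋) and Tsallis entropy satisfy C/E + T_p ≤ 1. -/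
theorem capacity_plus_tsallis_le_one (lam E p : ℝ) (hlam : lam ∈ Set.Icc (0:ℝ) (1/2))
    (hE : 0 < E) (hp : 2 ≤ p) :
    (E * (1 - 2 * lam)) / E +
      (1 - lam ^ p - (1 - lam) ^ p) / (p - 1) ≤ 1 := by
  obtain ⟨h0, h1⟩ := hlam
  rw [mul_comm, mul_div_assoc, div_self hE.ne', mul_one]
  have hb : 1 + p * (-lam) ≤ (1 + (-lam)) ^ p :=
    one_add_mul_self_le_rpow_one_add (by linarith) (by linarith)
  have hnn : (0:ℝ) ≤ lam ^ p := Real.rpow_nonneg h0 p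
  have key : (1 - lam ^ p - (1 - lam) ^ p) / (p - 1) ≤ 2 * lam := by
    rw [div_le_iff₀ (by linarith)]
    have : (1 + -lam) ^ p = (1 - lam) ^ p := by ring_nf
    nlinarith [this]
  linarith
end

section
/- For a qubit state ρ with diagonal entries 1−q, q and off-diagonal magnitude c, with Hamiltonian H = E|1⟩⟨1|, the capacity decomposes as C(ρ; H)² = C(ρ_inc; H)² + E²·(2c)², where ρ_inc is the dephased (diagonal) state with capacity C(ρ_inc; H) = |1−2q|E. -/
/-- the qubit capacity C = E√((2q−1)² + 4c²) decomposes as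
C² = C_inc² + E²·(2c)², where C_inc = |1−2q|·E is the capacity of the dephased state
and 2c is the l₁-norm of coherence. -/
theorem capacity_sq_decomposition (q c E : ℝ) (hq : q ∈ Set.Icc (0:ℝ) 1)
    (hc : c ∈ Set.Icc (0:ℝ) (Real.sqrt (q * (1 - q)))) (hE : 0 ≤ E) :
    (E * Real.sqrt ((2 * q - 1) ^ 2 + 4 * c ^ 2)) ^ 2
      = (|1 - 2 * q| * E) ^ 2 + E ^ 2 * (2 * c) ^ 2 := by
  have h : Real.sqrt ((2 * q - 1) ^ 2 + 4 * c ^ 2) ^ 2 = (2 * q - 1) ^ 2 + 4 * c ^ 2 :=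
    Real.sq_sqrt (by positivity)
  rw [mul_pow, h, mul_pow, sq_abs]
  ring
end
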